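/- With the notation A(n,d) = ∑ g_n(i_1,...,i_d) where the sum is over a+1 ≤ i_1,...,i_d ≤ b and g_n counts avoiders of σ^a P_{l,m} with prescribed first d values, for n ≥ k+1 and 1 ≤ d ≤ l-1 one has A(n, d+1) = A(n,d) - (m-d) A(n-1, d) - d A(n-1, d-1). -/

import Mathlib

open Finset Equiv

/-- `π` contains the pattern `τ`: some increasing subsequence of `π` is
order-isomorphic to `τ`. -/
def PContains {k n : ℕ} (τ : Equiv.Perm (Fin k)) (π : Equiv.Perm (Fin n)) : Prop :=
  ∃ f : Fin k ↪o Fin n, ∀ i j : Fin k, τ i < τ j ↔ π (f i) < π (f j)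

/-- `π` avoids every pattern in `T`. -/
def PAvoids {k n : ℕ} (π : Equiv.Perm (Fin n)) (T : Set (Equiv.Perm (Fin k))) : Prop :=
  ∀ τ ∈ T, ¬ PContains τ π

/-- The coset `σ^a P_{l,m}` of the maximal parabolic subgroup of `S_k` (`k = l+m`):
`τ ∈ σ^a P_{l,m}` iff the first `l` (1-based) values of `τ` are a permutation of
`{a+1, ..., a+l}` taken modulo `k` (in 0-based terms: `(τ j - a) mod k < l`). -/
def sigmaP (k l a : ℕ) : Set (Equiv.Perm (Fin k)) :=
  {τ | ∀ j : Fin k, (j : ℕ) < l → ((τ j : ℕ) + k - a) % k < l}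

/-- The number of permutations of `S_n` avoiding every pattern in `T ⊆ S_k`. -/
noncomputable def avoidersCard (k : ℕ) (T : Set (Equiv.Perm (Fin k))) (n : ℕ) : ℕ :=
  {π : Equiv.Perm (Fin n) | PAvoids π T}.ncard

/-- `g_n(i_1,...,i_d)`: the number of permutations in `S_n` avoiding `σ^a P_{l,m}`
whose value at (1-based) position `p` equals `i p` for `1 ≤ p ≤ d` (values 1-based). -/
noncomputable def gCount (l m a n d : ℕ) (i : ℕ → ℕ) : ℕ :=
  {π : Equiv.Perm (Fin n) | PAvoids π (sigmaP (l + m) l a) ∧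
    ∀ j : Fin n, (j : ℕ) < d → (π j : ℕ) + 1 = i ((j : ℕ) + 1)}.ncard

/-- `A(n,d) = ∑ g_n(i_1,...,i_d)` over all `a+1 ≤ i_1, ..., i_d ≤ b` with `b = n-m+a`. -/
noncomputable def ACount (l m a n d : ℕ) : ℕ :=
  ∑ iv ∈ Fintype.piFinset (fun _ : Fin d => Finset.Icc (a + 1) (n - m + a)),
    gCount l m a n d (fun p => if h : p - 1 < d then iv ⟨p - 1, h⟩ else 0)

namespace AvRec

/-- insertion of value `c` at position `j`. -/
def ins {N : ℕ} (j c : Fin (N+1)) (ρ : Perm (Fin N)) : Perm (Fin (N+1)) :=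
  (finSuccEquiv' j).trans (ρ.optionCongr.trans (finSuccEquiv' c).symm)

/-- deletion of position `j` (expected value `c`). -/
def del {N : ℕ} (j c : Fin (N+1)) (π : Perm (Fin (N+1))) : Perm (Fin N) :=
  Equiv.removeNone ((finSuccEquiv' j).symm.trans (π.trans (finSuccEquiv' c)))

@[simp] lemma ins_apply_self {N : ℕ} (j c : Fin (N+1)) (ρ : Perm (Fin N)) :
    ins j c ρ j = c := by
  simp [ins, finSuccEquiv'_at, finSuccEquiv'_symm_none]

@[simp] lemma ins_apply_succAbove {N : ℕ} (j c : Fin (N+1)) (ρ : Perm (Fin N)) (x : Fin N) :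
    ins j c ρ (j.succAbove x) = c.succAbove (ρ x) := by
  simp [ins, finSuccEquiv'_succAbove, finSuccEquiv'_symm_some]

@[simp] lemma del_ins {N : ℕ} (j c : Fin (N+1)) (ρ : Perm (Fin N)) :
    del j c (ins j c ρ) = ρ := by
  have : (finSuccEquiv' j).symm.trans ((ins j c ρ).trans (finSuccEquiv' c)) = ρ.optionCongr := by
    ext x; simp [ins]
  rw [del, this, Equiv.removeNone_optionCongr]

lemma del_apply {N : ℕ} (j c : Fin (N+1)) (π : Perm (Fin (N+1))) (hπ : π j = c) (x : Fin N) :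
    π (j.succAbove x) = c.succAbove (del j c π x) := by
  set e := (finSuccEquiv' j).symm.trans (π.trans (finSuccEquiv' c)) with he
  have hne : π (j.succAbove x) ≠ c := by
    intro h; exact (Fin.succAbove_ne j x) (π.injective (h.trans hπ.symm))
  have hsome : ∃ x', e (some x) = some x' := by
    simp only [he, Equiv.trans_apply, finSuccEquiv'_symm_some]
    rcases h : finSuccEquiv' c (π (j.succAbove x)) with _ | y
    · exfalso; apply hne
      have := congrArg (finSuccEquiv' c).symm h
      simpa [finSuccEquiv'_symm_none] using this
    · exact ⟨y, rfl⟩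
  have := Equiv.removeNone_some e hsome
  have h2 : e (some x) = finSuccEquiv' c (π (j.succAbove x)) := by
    simp [he, finSuccEquiv'_symm_some]
  rw [h2] at this
  have := congrArg (finSuccEquiv' c).symm this.symm
  exact (by simpa [finSuccEquiv'_symm_some] using this :
    π (j.succAbove x) = c.succAbove (e.removeNone x))

lemma ins_del {N : ℕ} (j c : Fin (N+1)) (π : Perm (Fin (N+1))) (hπ : π j = c) :
    ins j c (del j c π) = π := by
  apply Equiv.ext; intro i
  rcases eq_or_ne i j with rfl | h
  · simp [hπ]
  · obtain ⟨x, rfl⟩ := Fin.exists_succAbove_eq h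
    rw [ins_apply_succAbove, ← del_apply j c π hπ]

end AvRec

namespace AvRec
open Finset Equiv

lemma emb_le_apply {k N : ℕ} (f : Fin k ↪o Fin N) : ∀ (t : ℕ) (i : Fin k), (i:ℕ) = t → t ≤ (f i : ℕ) := by
  intro t
  induction t with
  | zero => intro i _; exact Nat.zero_le _
  | succ t ih =>
    intro i hi
    have hp : t < k := by omega
    have h1 : (⟨t, hp⟩ : Fin k) < i := by simp [Fin.lt_def, hi]
    have h0 := ih ⟨t, hp⟩ rfl
    have h2 : f ⟨t, hp⟩ < f i := f.strictMono h1
    rw [Fin.lt_def] at h2; omega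

lemma coe_succAbove {N : ℕ} (p : Fin (N+1)) (x : Fin N) :
    ((p.succAbove x : Fin (N+1)) : ℕ) = if (x:ℕ) < (p:ℕ) then (x:ℕ) else (x:ℕ)+1 := by
  rw [Fin.succAbove]
  split_ifs with h1 h2 h2 <;> simp_all [Fin.lt_def]

/-- an occurrence in the deleted permutation lifts. -/
lemma contains_of_contains_del {k N : ℕ} (j c : Fin (N+1)) (π : Perm (Fin (N+1)))
    (hπ : π j = c) (τ : Perm (Fin k)) (h : PContains τ (del j c π)) : PContains τ π := by
  obtain ⟨f, hf⟩ := h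
  refine ⟨f.trans j.succAboveOrderEmb, fun i i' => ?_⟩
  have e1 : ∀ i'', π ((f.trans j.succAboveOrderEmb) i'') = c.succAbove (del j c π (f i'')) := by
    intro i''; rw [← del_apply j c π hπ]; rfl
  rw [e1, e1, Fin.succAbove_lt_succAbove_iff]
  exact hf i i'

/-- an occurrence of `π` missing position `j` descends to the deletion. -/
lemma contains_del_of_contains {k N : ℕ} (j c : Fin (N+1)) (π : Perm (Fin (N+1)))
    (hπ : π j = c) (τ : Perm (Fin k)) (f : Fin k ↪o Fin (N+1))
    (hf : ∀ i i' : Fin k, τ i < τ i' ↔ π (f i) < π (f i'))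
    (hmiss : ∀ i, f i ≠ j) : PContains τ (del j c π) := by
  have hex : ∀ i, ∃ x : Fin N, j.succAbove x = f i := fun i => Fin.exists_succAbove_eq (hmiss i)
  choose g hg using hex
  have hgm : StrictMono g := by
    intro i i' h
    have : j.succAbove (g i) < j.succAbove (g i') := by rw [hg, hg]; exact f.strictMono h
    exact (Fin.succAbove_lt_succAbove_iff).1 this
  refine ⟨OrderEmbedding.ofStrictMono g hgm, fun i i' => ?_⟩
  have e1 : ∀ i'', c.succAbove (del j c π (g i'')) = π (f i'') := by
    intro i''; rw [← del_apply j c π hπ, hg]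
  rw [hf i i', ← e1, ← e1, Fin.succAbove_lt_succAbove_iff]
  rfl

lemma avoids_del {l m a N : ℕ} (j c : Fin (N+1)) (π : Perm (Fin (N+1))) (hπ : π j = c)
    (h : PAvoids π (sigmaP (l+m) l a)) : PAvoids (del j c π) (sigmaP (l+m) l a) :=
  fun τ hτ hc => h τ hτ (contains_of_contains_del j c π hπ τ hc)

lemma card_coe_filter (ν lo hi : ℕ) (hhi : hi ≤ ν) :
    ((univ : Finset (Fin ν)).filter (fun v : Fin ν => lo ≤ (v:ℕ) ∧ (v:ℕ) < hi)).card = hi - lo := by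
  rw [← Nat.card_Ico lo hi]
  refine Finset.card_bij' (fun (v : Fin ν) _ => (v:ℕ))
    (fun (x : ℕ) (hx : x ∈ Finset.Ico lo hi) => (⟨x, lt_of_lt_of_le (Finset.mem_Ico.1 hx).2 hhi⟩ : Fin ν))
    ?_ ?_ ?_ ?_
  · intro v hv; simp only [Finset.mem_filter, Finset.mem_univ, true_and] at hv
    simp [Finset.mem_Ico]; omega
  · intro x hx; simp only [Finset.mem_Ico] at hx
    simp only [Finset.mem_filter, Finset.mem_univ, true_and]; exact hx
  · intro v hv; simp
  · intro x hx; simp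

lemma card_filter_perm_comp {ν : ℕ} (τ : Perm (Fin ν)) (p : Fin ν → Prop) [DecidablePred p] :
    ((univ : Finset (Fin ν)).filter (fun i : Fin ν => p (τ i))).card
      = ((univ : Finset (Fin ν)).filter p).card := by
  refine Finset.card_bij' (fun (i : Fin ν) _ => τ i) (fun (v : Fin ν) _ => τ.symm v) ?_ ?_ ?_ ?_
  · intro i hi; simp only [Finset.mem_filter] at hi ⊢; exact ⟨Finset.mem_univ _, hi.2⟩
  · intro v hv; simp only [Finset.mem_filter] at hv ⊢; simpa using hv.2
  · intro i _; simp
  · intro v _; simp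

/-- characterization of membership in `sigmaP` (when `a ≤ m`). -/
lemma mem_sigmaP_iff {l m a : ℕ} (ha : a ≤ m) (τ : Perm (Fin (l+m))) :
    τ ∈ sigmaP (l+m) l a ↔ ∀ j : Fin (l+m), (j:ℕ) < l → (a ≤ (τ j:ℕ) ∧ (τ j:ℕ) < a + l) := by
  constructor
  · intro h j hj
    have hh := h j hj
    have hx : (τ j : ℕ) < l + m := (τ j).2
    rcases le_or_gt a (τ j : ℕ) with h1 | h1
    · have e : ((τ j:ℕ) + (l+m) - a) = ((τ j:ℕ) - a) + (l+m) := by omega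
      rw [e, Nat.add_mod_right, Nat.mod_eq_of_lt (by omega)] at hh
      omega
    · have e : ((τ j:ℕ) + (l+m) - a) % (l+m) = (τ j:ℕ) + (l+m) - a := by
        apply Nat.mod_eq_of_lt; omega
      rw [e] at hh; omega
  · intro h j hj
    obtain ⟨h1, h2⟩ := h j hj
    have e : ((τ j:ℕ) + (l+m) - a) = ((τ j:ℕ) - a) + (l+m) := by omega
    rw [e, Nat.add_mod_right, Nat.mod_eq_of_lt (by omega)]
    omega

/-- The key insertion lemma: inserting an out-of-window value at a position `< l`
preserves avoidance. -/
lemma avoids_ins {l m a N : ℕ} (ha : a ≤ m) (j c : Fin (N+1)) (hj : (j:ℕ) < l)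
    (hc : (c:ℕ) < a ∨ a + (N+1) ≤ (c:ℕ) + m)
    (ρ : Perm (Fin N)) (hρ : PAvoids ρ (sigmaP (l+m) l a)) :
    PAvoids (ins j c ρ) (sigmaP (l+m) l a) := by
  classical
  intro τ hτ hcont
  obtain ⟨f, hf⟩ := hcont
  set π := ins j c ρ with hπdef
  have hπj : π j = c := ins_apply_self j c ρ
  by_cases hmiss : ∀ i, f i ≠ j
  · have : PContains τ (del j c π) := contains_del_of_contains j c π hπj τ f hf hmiss
    rw [hπdef, del_ins] at this
    exact hρ τ hτ this
  · push_neg at hmiss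
    obtain ⟨i0, hi0⟩ := hmiss
    have hi0l : (i0:ℕ) < l := by
      have := emb_le_apply f (i0:ℕ) i0 rfl
      rw [hi0] at this; omega
    have hτc := (mem_sigmaP_iff ha τ).1 hτ i0 hi0l
    rcases hc with hlow | hhigh
    · -- c < a : count indices with τ i < a
      have hcard : ((univ : Finset (Fin (l+m))).filter
          (fun i : Fin (l+m) => (τ i : ℕ) < a)).card = a := by
        rw [card_filter_perm_comp τ (fun v : Fin (l+m) => (v:ℕ) < a)]
        have h2 : ((univ : Finset (Fin (l+m))).filter (fun v : Fin (l+m) => (v:ℕ) < a))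
            = ((univ : Finset (Fin (l+m))).filter
                (fun v : Fin (l+m) => 0 ≤ (v:ℕ) ∧ (v:ℕ) < a)) := by
          apply Finset.filter_congr; intro v _; simp
        rw [h2, card_coe_filter (l+m) 0 a (by omega)]; omega
      have hsub : ∀ i ∈ (univ : Finset (Fin (l+m))).filter
          (fun i : Fin (l+m) => (τ i : ℕ) < a),
          π (f i) ∈ (univ : Finset (Fin (N+1))).filter
            (fun v : Fin (N+1) => 0 ≤ (v:ℕ) ∧ (v:ℕ) < (c:ℕ)) := by
        intro i hi
        simp only [Finset.mem_filter, Finset.mem_univ, true_and] at hi ⊢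
        have hlt : τ i < τ i0 := by rw [Fin.lt_def]; omega
        have h3 := (hf i i0).1 hlt
        rw [hi0, hπj] at h3
        rw [Fin.lt_def] at h3
        omega
      have hinj : Set.InjOn (fun i : Fin (l+m) => π (f i))
          ((univ : Finset (Fin (l+m))).filter (fun i : Fin (l+m) => (τ i : ℕ) < a)) := by
        intro x _ y _ hxy
        exact f.injective (π.injective hxy)
      have hle := Finset.card_le_card_of_injOn _ hsub hinj
      have hT := card_coe_filter (N+1) 0 (c:ℕ) (by omega)
      omega
    · -- c high : count indices with τ i ≥ a + l
      have hcard : ((univ : Finset (Fin (l+m))).filter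
          (fun i : Fin (l+m) => a + l ≤ (τ i : ℕ))).card = m - a := by
        rw [card_filter_perm_comp τ (fun v : Fin (l+m) => a + l ≤ (v:ℕ))]
        have h2 : ((univ : Finset (Fin (l+m))).filter (fun v : Fin (l+m) => a + l ≤ (v:ℕ)))
            = ((univ : Finset (Fin (l+m))).filter
                (fun v : Fin (l+m) => a + l ≤ (v:ℕ) ∧ (v:ℕ) < l + m)) := by
          apply Finset.filter_congr; intro v _; simp [v.2]
        rw [h2, card_coe_filter (l+m) (a+l) (l+m) le_rfl]; omega
      have hsub : ∀ i ∈ (univ : Finset (Fin (l+m))).filter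
          (fun i : Fin (l+m) => a + l ≤ (τ i : ℕ)),
          π (f i) ∈ (univ : Finset (Fin (N+1))).filter
            (fun v : Fin (N+1) => (c:ℕ)+1 ≤ (v:ℕ) ∧ (v:ℕ) < N+1) := by
        intro i hi
        simp only [Finset.mem_filter, Finset.mem_univ, true_and] at hi ⊢
        have hlt : τ i0 < τ i := by rw [Fin.lt_def]; omega
        have h3 := (hf i0 i).1 hlt
        rw [hi0, hπj] at h3
        rw [Fin.lt_def] at h3
        exact ⟨by omega, (π (f i)).2⟩
      have hinj : Set.InjOn (fun i : Fin (l+m) => π (f i))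
          ((univ : Finset (Fin (l+m))).filter (fun i : Fin (l+m) => a + l ≤ (τ i : ℕ))) := by
        intro x _ y _ hxy
        exact f.injective (π.injective hxy)
      have hle := Finset.card_le_card_of_injOn _ hsub hinj
      have hT := card_coe_filter (N+1) ((c:ℕ)+1) (N+1) le_rfl
      have hcN : (c:ℕ) < N+1 := c.2
      omega


open scoped Classical in
noncomputable def AvF (l m a ν : ℕ) : Finset (Perm (Fin ν)) :=
  Finset.univ.filter (fun π => PAvoids π (sigmaP (l + m) l a))

lemma mem_AvF {l m a ν : ℕ} (π : Perm (Fin ν)) :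
    π ∈ AvF l m a ν ↔ PAvoids π (sigmaP (l + m) l a) := by
  simp [AvF]

def wmem (a m ν : ℕ) (v : ℕ) : Prop := a ≤ v ∧ v + m < ν + a
def wlow (a m ν : ℕ) (v : ℕ) : Prop := a ≤ v + 1 ∧ v + m < ν + a
def whigh (a m ν : ℕ) (v : ℕ) : Prop := a ≤ v ∧ v + m ≤ ν + a

open scoped Classical in
noncomputable def cntW (l m a ν e : ℕ) (W : ℕ → Prop) : ℕ :=
  ((AvF l m a ν).filter (fun π : Perm (Fin ν) => ∀ i : Fin ν, (i:ℕ) < e → W ((π i : ℕ)))).card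

lemma wmem_succAbove_low {a m N : ℕ} (c : Fin (N+1)) (hc : (c:ℕ) < a) (x : Fin N) :
    wmem a m (N+1) ((c.succAbove x : Fin (N+1)) : ℕ) ↔ wlow a m N (x:ℕ) := by
  rw [coe_succAbove]; unfold wmem wlow; split_ifs with h <;> omega

lemma wmem_succAbove_high {a m N : ℕ} (c : Fin (N+1)) (hc : a + (N+1) ≤ (c:ℕ) + m)
    (x : Fin N) :
    wmem a m (N+1) ((c.succAbove x : Fin (N+1)) : ℕ) ↔ whigh a m N (x:ℕ) := by
  have := c.2
  rw [coe_succAbove]; unfold wmem whigh; split_ifs with h <;> omega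

open scoped Classical in
lemma master {l m a : ℕ} (ha : a ≤ m) (N t : ℕ) (ht : t < l) (j c : Fin (N+1))
    (hj : (j:ℕ) ≤ t) (hc : (c:ℕ) < a ∨ a + (N+1) ≤ (c:ℕ) + m) :
    ((AvF l m a (N+1)).filter (fun π : Perm (Fin (N+1)) => π j = c ∧
        ∀ i : Fin (N+1), (i:ℕ) ≤ t → i ≠ j → wmem a m (N+1) ((π i : ℕ)))).card
      = ((AvF l m a N).filter (fun π : Perm (Fin N) => ∀ x : Fin N, (x:ℕ) < t →
            wmem a m (N+1) ((c.succAbove (π x) : Fin (N+1)) : ℕ))).card := by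
  classical
  refine Finset.card_bij' (fun π _ => del j c π) (fun ρ _ => ins j c ρ) ?_ ?_ ?_ ?_
  · intro π hπ
    rw [Finset.mem_filter] at hπ
    have hav := (mem_AvF π).1 hπ.1
    have hjc := hπ.2.1
    have hwin := hπ.2.2
    rw [Finset.mem_filter]
    refine ⟨(mem_AvF _).2 (avoids_del j c π hjc hav), ?_⟩
    intro x hx
    rw [← del_apply j c π hjc x]
    apply hwin
    · rw [coe_succAbove]; split_ifs <;> omega
    · exact Fin.succAbove_ne j x
  · intro ρ hρ
    rw [Finset.mem_filter] at hρ
    have hav := (mem_AvF ρ).1 hρ.1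
    have hwin := hρ.2
    rw [Finset.mem_filter]
    refine ⟨(mem_AvF _).2 (avoids_ins ha j c (by omega) hc ρ hav), ins_apply_self j c ρ, ?_⟩
    intro i hit hij
    obtain ⟨x, rfl⟩ := Fin.exists_succAbove_eq hij
    rw [ins_apply_succAbove]
    apply hwin
    have := coe_succAbove j x
    split_ifs at this <;> omega
  · intro π hπ
    rw [Finset.mem_filter] at hπ
    exact ins_del j c π hπ.2.1
  · intro ρ _
    exact del_ins j c ρ


open scoped Classical in
lemma masterL {l m a : ℕ} (ha : a ≤ m) (N t : ℕ) (ht : t < l) (j c : Fin (N+1))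
    (hj : (j:ℕ) ≤ t) (hcl : (c:ℕ) < a) :
    ((AvF l m a (N+1)).filter (fun π : Perm (Fin (N+1)) => π j = c ∧
        ∀ i : Fin (N+1), (i:ℕ) ≤ t → i ≠ j → wmem a m (N+1) ((π i : ℕ)))).card
      = cntW l m a N t (wlow a m N) := by
  rw [master ha N t ht j c hj (Or.inl hcl)]
  unfold cntW
  congr 1
  apply Finset.filter_congr
  intro π _
  constructor
  · intro h x hx; exact (wmem_succAbove_low c hcl (π x)).1 (h x hx)
  · intro h x hx; exact (wmem_succAbove_low c hcl (π x)).2 (h x hx)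

open scoped Classical in
lemma masterH {l m a : ℕ} (ha : a ≤ m) (N t : ℕ) (ht : t < l) (j c : Fin (N+1))
    (hj : (j:ℕ) ≤ t) (hch : a + (N+1) ≤ (c:ℕ) + m) :
    ((AvF l m a (N+1)).filter (fun π : Perm (Fin (N+1)) => π j = c ∧
        ∀ i : Fin (N+1), (i:ℕ) ≤ t → i ≠ j → wmem a m (N+1) ((π i : ℕ)))).card
      = cntW l m a N t (whigh a m N) := by
  rw [master ha N t ht j c hj (Or.inr hch)]
  unfold cntW
  congr 1
  apply Finset.filter_congr
  intro π _
  constructor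
  · intro h x hx; exact (wmem_succAbove_high c hch (π x)).1 (h x hx)
  · intro h x hx; exact (wmem_succAbove_high c hch (π x)).2 (h x hx)


open scoped Classical in
lemma L1 {l m a : ℕ} (ha : a ≤ m) (N e : ℕ) (he : e < l) (heN : e < N + 1) (hmN : m ≤ N) :
    cntW l m a (N+1) e (wmem a m (N+1))
      = cntW l m a (N+1) (e+1) (wmem a m (N+1))
        + a * cntW l m a N e (wlow a m N)
        + (m - a) * cntW l m a N e (whigh a m N) := by
  classical
  set pe : Fin (N+1) := ⟨e, heN⟩ with hpe
  have hpev : (pe : ℕ) = e := rfl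
  set S := (AvF l m a (N+1)).filter
      (fun π : Perm (Fin (N+1)) => ∀ i : Fin (N+1), (i:ℕ) < e → wmem a m (N+1) ((π i : ℕ)))
    with hS
  have hfib : S.card = ∑ c ∈ (univ : Finset (Fin (N+1))),
      (S.filter (fun π => π pe = c)).card :=
    Finset.card_eq_sum_card_fiberwise (fun π _ => Finset.mem_univ _)
  rw [← Finset.sum_filter_add_sum_filter_not (univ : Finset (Fin (N+1)))
      (fun c : Fin (N+1) => wmem a m (N+1) (c:ℕ))] at hfib
  -- part A : in-window values of π(e)
  have hA : ∑ c ∈ (univ : Finset (Fin (N+1))).filter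
        (fun c : Fin (N+1) => wmem a m (N+1) (c:ℕ)),
      (S.filter (fun π => π pe = c)).card = cntW l m a (N+1) (e+1) (wmem a m (N+1)) := by
    unfold cntW
    rw [Finset.card_eq_sum_card_fiberwise (f := fun π => π pe)
      (t := (univ : Finset (Fin (N+1))).filter (fun c : Fin (N+1) => wmem a m (N+1) (c:ℕ)))]
    · apply Finset.sum_congr rfl
      intro c hc
      rw [Finset.mem_filter] at hc
      congr 1
      ext π
      simp only [hS, Finset.filter_filter, Finset.mem_filter]
      constructor
      · rintro ⟨h1, h2, h3⟩
        refine ⟨h1, fun i hi => ?_, h3⟩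
        rcases Nat.lt_or_ge (i:ℕ) e with h | h
        · exact h2 i h
        · have : i = pe := Fin.ext (by omega)
          rw [this, h3]; exact hc.2
      · rintro ⟨h1, h2, h3⟩
        exact ⟨h1, fun i hi => h2 i (by omega), h3⟩
    · intro π hπ
      rw [Finset.mem_coe, Finset.mem_filter] at hπ
      rw [Finset.mem_coe, Finset.mem_filter]
      exact ⟨Finset.mem_univ _, hπ.2 pe (by omega)⟩
  -- part B : out-of-window values
  have hsplit : (univ : Finset (Fin (N+1))).filter
        (fun c : Fin (N+1) => ¬ wmem a m (N+1) (c:ℕ))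
      = ((univ : Finset (Fin (N+1))).filter (fun c : Fin (N+1) => (c:ℕ) < a))
        ∪ ((univ : Finset (Fin (N+1))).filter
            (fun c : Fin (N+1) => a + (N+1) ≤ (c:ℕ) + m)) := by
    ext c
    have := c.2
    simp only [Finset.mem_filter, Finset.mem_union, Finset.mem_univ, true_and]
    unfold wmem
    omega
  have hdisj : Disjoint ((univ : Finset (Fin (N+1))).filter (fun c : Fin (N+1) => (c:ℕ) < a))
      ((univ : Finset (Fin (N+1))).filter (fun c : Fin (N+1) => a + (N+1) ≤ (c:ℕ) + m)) := by
    rw [Finset.disjoint_left]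
    intro c h1 h2
    rw [Finset.mem_filter] at h1 h2
    omega
  have hterm : ∀ c : Fin (N+1), (S.filter (fun π => π pe = c)).card
      = ((AvF l m a (N+1)).filter (fun π : Perm (Fin (N+1)) => π pe = c ∧
          ∀ i : Fin (N+1), (i:ℕ) ≤ e → i ≠ pe → wmem a m (N+1) ((π i : ℕ)))).card := by
    intro c
    congr 1
    ext π
    simp only [hS, Finset.filter_filter, Finset.mem_filter]
    constructor
    · rintro ⟨h1, h2, h3⟩
      refine ⟨h1, h3, fun i hi hne => h2 i ?_⟩
      have : (i:ℕ) ≠ e := fun h => hne (Fin.ext (by omega))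
      omega
    · rintro ⟨h1, h2, h3⟩
      refine ⟨h1, fun i hi => h3 i (by omega) (fun h => ?_), h2⟩
      rw [h] at hi
      omega
  have hconstL : ∀ c ∈ (univ : Finset (Fin (N+1))).filter (fun c : Fin (N+1) => (c:ℕ) < a),
      (S.filter (fun π => π pe = c)).card = cntW l m a N e (wlow a m N) := by
    intro c hc
    rw [Finset.mem_filter] at hc
    rw [hterm c]
    exact masterL ha N e he pe c (by omega) hc.2
  have hconstH : ∀ c ∈ (univ : Finset (Fin (N+1))).filter
        (fun c : Fin (N+1) => a + (N+1) ≤ (c:ℕ) + m),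
      (S.filter (fun π => π pe = c)).card = cntW l m a N e (whigh a m N) := by
    intro c hc
    rw [Finset.mem_filter] at hc
    rw [hterm c]
    exact masterH ha N e he pe c (by omega) hc.2
  have hcardL : ((univ : Finset (Fin (N+1))).filter (fun c : Fin (N+1) => (c:ℕ) < a)).card
      = a := by
    have h2 : ((univ : Finset (Fin (N+1))).filter (fun c : Fin (N+1) => (c:ℕ) < a))
        = ((univ : Finset (Fin (N+1))).filter
            (fun c : Fin (N+1) => 0 ≤ (c:ℕ) ∧ (c:ℕ) < a)) := by
      apply Finset.filter_congr; intro c _; simp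
    rw [h2, card_coe_filter (N+1) 0 a (by omega)]; omega
  have hcardH : ((univ : Finset (Fin (N+1))).filter
        (fun c : Fin (N+1) => a + (N+1) ≤ (c:ℕ) + m)).card = m - a := by
    have h2 : ((univ : Finset (Fin (N+1))).filter
          (fun c : Fin (N+1) => a + (N+1) ≤ (c:ℕ) + m))
        = ((univ : Finset (Fin (N+1))).filter
            (fun c : Fin (N+1) => a + (N+1) - m ≤ (c:ℕ) ∧ (c:ℕ) < N+1)) := by
      apply Finset.filter_congr; intro c _
      have := c.2
      constructor
      · intro h; constructor <;> omega
      · intro h; omega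
    rw [h2, card_coe_filter (N+1) (a+(N+1)-m) (N+1) le_rfl]
    omega
  have hBlow : ∑ c ∈ (univ : Finset (Fin (N+1))).filter (fun c : Fin (N+1) => (c:ℕ) < a),
      (S.filter (fun π => π pe = c)).card = a * cntW l m a N e (wlow a m N) := by
    rw [Finset.sum_congr rfl hconstL, Finset.sum_const, smul_eq_mul, hcardL]
  have hBhigh : ∑ c ∈ (univ : Finset (Fin (N+1))).filter
        (fun c : Fin (N+1) => a + (N+1) ≤ (c:ℕ) + m),
      (S.filter (fun π => π pe = c)).card = (m - a) * cntW l m a N e (whigh a m N) := by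
    rw [Finset.sum_congr rfl hconstH, Finset.sum_const, smul_eq_mul, hcardH]
  have hL : cntW l m a (N+1) e (wmem a m (N+1)) = S.card := rfl
  rw [hL, hfib, hA, hsplit, Finset.sum_union hdisj, hBlow, hBhigh]
  ring


open scoped Classical in
lemma L2L {l m a : ℕ} (ha : a ≤ m) (ha1 : 1 ≤ a) (N e : ℕ) (he : e < l)
    (heN : e + 1 < N + 1) (hmN : m ≤ N) :
    cntW l m a (N+1) (e+1) (wlow a m (N+1))
      = cntW l m a (N+1) (e+1) (wmem a m (N+1)) + (e+1) * cntW l m a N e (wlow a m N) := by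
  classical
  have hbd : a - 1 < N + 1 := by omega
  set bd : Fin (N+1) := ⟨a-1, hbd⟩ with hbddef
  have hbdv : (bd : ℕ) = a - 1 := rfl
  set T := (AvF l m a (N+1)).filter
      (fun π : Perm (Fin (N+1)) => ∀ i : Fin (N+1), (i:ℕ) < e+1 → wlow a m (N+1) ((π i : ℕ)))
    with hT
  have hsplit := Finset.card_filter_add_card_filter_not
    (s := T) (p := fun π : Perm (Fin (N+1)) => ((π.symm bd : Fin (N+1)) : ℕ) < e + 1)
  -- the part with no prefix entry equal to bd
  have hN : (T.filter (fun π : Perm (Fin (N+1)) =>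
        ¬ ((π.symm bd : Fin (N+1)) : ℕ) < e + 1)).card
      = cntW l m a (N+1) (e+1) (wmem a m (N+1)) := by
    unfold cntW
    congr 1
    ext π
    simp only [hT, Finset.filter_filter, Finset.mem_filter]
    constructor
    · rintro ⟨h1, h2, h3⟩
      refine ⟨h1, fun i hi => ?_⟩
      have hw := h2 i hi
      have hne : π i ≠ bd := by
        intro hcc
        have : π.symm bd = i := by rw [← hcc]; exact π.symm_apply_apply i
        rw [this] at h3; omega
      have hnev : (π i : ℕ) ≠ a - 1 := fun hx => hne (Fin.ext (by omega))
      unfold wlow at hw; unfold wmem; omega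
    · rintro ⟨h1, h2⟩
      refine ⟨h1, fun i hi => ?_, fun hlt => ?_⟩
      · have hw := h2 i hi; unfold wmem at hw; unfold wlow; omega
      · have hw := h2 (π.symm bd) hlt
        rw [π.apply_symm_apply] at hw
        unfold wmem at hw; omega
  -- the part where some prefix entry is bd, fibred over its position
  have hB : (T.filter (fun π : Perm (Fin (N+1)) =>
        ((π.symm bd : Fin (N+1)) : ℕ) < e + 1)).card
      = (e+1) * cntW l m a N e (wlow a m N) := by
    rw [Finset.card_eq_sum_card_fiberwise (f := fun π : Perm (Fin (N+1)) =>
        ((π.symm bd : Fin (N+1)) : ℕ)) (t := Finset.range (e+1))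
        (fun π hπ => by rw [Finset.mem_coe, Finset.mem_filter] at hπ; exact Finset.mem_coe.2 (Finset.mem_range.2 hπ.2))]
    have hconst : ∀ jv ∈ Finset.range (e+1),
        ((T.filter (fun π : Perm (Fin (N+1)) =>
            ((π.symm bd : Fin (N+1)) : ℕ) < e + 1)).filter
          (fun π : Perm (Fin (N+1)) => ((π.symm bd : Fin (N+1)) : ℕ) = jv)).card
        = cntW l m a N e (wlow a m N) := by
      intro jv hjv
      rw [Finset.mem_range] at hjv
      have hjN : jv < N + 1 := by omega
      set pj : Fin (N+1) := ⟨jv, hjN⟩ with hpjdef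
      have hpjv : (pj : ℕ) = jv := rfl
      have hstep : ((T.filter (fun π : Perm (Fin (N+1)) =>
            ((π.symm bd : Fin (N+1)) : ℕ) < e + 1)).filter
          (fun π : Perm (Fin (N+1)) => ((π.symm bd : Fin (N+1)) : ℕ) = jv))
          = ((AvF l m a (N+1)).filter (fun π : Perm (Fin (N+1)) => π pj = bd ∧
              ∀ i : Fin (N+1), (i:ℕ) ≤ e → i ≠ pj → wmem a m (N+1) ((π i : ℕ)))) := by
        ext π
        simp only [hT, Finset.filter_filter, Finset.mem_filter]
        constructor
        · rintro ⟨h1, ⟨h2, -⟩, h4⟩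
          have hsymm : π.symm bd = pj := Fin.ext (by omega)
          have hπpj : π pj = bd := by rw [← hsymm]; exact π.apply_symm_apply bd
          refine ⟨h1, hπpj, fun i hi hne => ?_⟩
          have hw := h2 i (by omega)
          have hne2 : π i ≠ bd := by
            intro hcc
            apply hne
            have : π.symm bd = i := by rw [← hcc]; exact π.symm_apply_apply i
            rw [← this, hsymm]
          have hnev : (π i : ℕ) ≠ a - 1 := fun hx => hne2 (Fin.ext (by omega))
          unfold wlow at hw; unfold wmem; omega
        · rintro ⟨h1, h2, h3⟩
          have hsymm : π.symm bd = pj := by rw [← h2]; exact π.symm_apply_apply pj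
          refine ⟨h1, ⟨fun i hi => ?_, by rw [hsymm, hpjv]; omega⟩, by rw [hsymm, hpjv]⟩
          rcases eq_or_ne i pj with rfl | hne
          · rw [h2, hbdv]; unfold wlow; omega
          · have hw := h3 i (by omega) hne
            unfold wmem at hw; unfold wlow; omega
      rw [hstep]
      exact masterL ha N e he pj bd (by omega) (by omega)
    rw [Finset.sum_congr rfl hconst, Finset.sum_const, smul_eq_mul, Finset.card_range]
  have hL : cntW l m a (N+1) (e+1) (wlow a m (N+1)) = T.card := rfl
  rw [hL, ← hsplit, hN, hB]
  ring


open scoped Classical in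
lemma L2H {l m a : ℕ} (ha : a ≤ m) (haM : a < m) (N e : ℕ) (he : e < l)
    (heN : e + 1 < N + 1) (hmN : m ≤ N) :
    cntW l m a (N+1) (e+1) (whigh a m (N+1))
      = cntW l m a (N+1) (e+1) (wmem a m (N+1)) + (e+1) * cntW l m a N e (whigh a m N) := by
  classical
  have hbd : a + (N+1) - m < N + 1 := by omega
  set bd : Fin (N+1) := ⟨a + (N+1) - m, hbd⟩ with hbddef
  have hbdv : (bd : ℕ) = a + (N+1) - m := rfl
  set T := (AvF l m a (N+1)).filter
      (fun π : Perm (Fin (N+1)) => ∀ i : Fin (N+1), (i:ℕ) < e+1 → whigh a m (N+1) ((π i : ℕ)))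
    with hT
  have hsplit := Finset.card_filter_add_card_filter_not
    (s := T) (p := fun π : Perm (Fin (N+1)) => ((π.symm bd : Fin (N+1)) : ℕ) < e + 1)
  have hN : (T.filter (fun π : Perm (Fin (N+1)) =>
        ¬ ((π.symm bd : Fin (N+1)) : ℕ) < e + 1)).card
      = cntW l m a (N+1) (e+1) (wmem a m (N+1)) := by
    unfold cntW
    congr 1
    ext π
    simp only [hT, Finset.filter_filter, Finset.mem_filter]
    constructor
    · rintro ⟨h1, h2, h3⟩
      refine ⟨h1, fun i hi => ?_⟩
      have hw := h2 i hi
      have hne : π i ≠ bd := by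
        intro hcc
        have : π.symm bd = i := by rw [← hcc]; exact π.symm_apply_apply i
        rw [this] at h3; omega
      have hnev : (π i : ℕ) ≠ a + (N+1) - m := fun hx => hne (Fin.ext (by omega))
      unfold whigh at hw; unfold wmem; omega
    · rintro ⟨h1, h2⟩
      refine ⟨h1, fun i hi => ?_, fun hlt => ?_⟩
      · have hw := h2 i hi; unfold wmem at hw; unfold whigh; omega
      · have hw := h2 (π.symm bd) hlt
        rw [π.apply_symm_apply] at hw
        unfold wmem at hw; omega
  have hB : (T.filter (fun π : Perm (Fin (N+1)) =>
        ((π.symm bd : Fin (N+1)) : ℕ) < e + 1)).card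
      = (e+1) * cntW l m a N e (whigh a m N) := by
    rw [Finset.card_eq_sum_card_fiberwise (f := fun π : Perm (Fin (N+1)) =>
        ((π.symm bd : Fin (N+1)) : ℕ)) (t := Finset.range (e+1))
        (fun π hπ => by rw [Finset.mem_coe, Finset.mem_filter] at hπ; exact Finset.mem_coe.2 (Finset.mem_range.2 hπ.2))]
    have hconst : ∀ jv ∈ Finset.range (e+1),
        ((T.filter (fun π : Perm (Fin (N+1)) =>
            ((π.symm bd : Fin (N+1)) : ℕ) < e + 1)).filter
          (fun π : Perm (Fin (N+1)) => ((π.symm bd : Fin (N+1)) : ℕ) = jv)).card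
        = cntW l m a N e (whigh a m N) := by
      intro jv hjv
      rw [Finset.mem_range] at hjv
      have hjN : jv < N + 1 := by omega
      set pj : Fin (N+1) := ⟨jv, hjN⟩ with hpjdef
      have hpjv : (pj : ℕ) = jv := rfl
      have hstep : ((T.filter (fun π : Perm (Fin (N+1)) =>
            ((π.symm bd : Fin (N+1)) : ℕ) < e + 1)).filter
          (fun π : Perm (Fin (N+1)) => ((π.symm bd : Fin (N+1)) : ℕ) = jv))
          = ((AvF l m a (N+1)).filter (fun π : Perm (Fin (N+1)) => π pj = bd ∧
              ∀ i : Fin (N+1), (i:ℕ) ≤ e → i ≠ pj → wmem a m (N+1) ((π i : ℕ)))) := by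
        ext π
        simp only [hT, Finset.filter_filter, Finset.mem_filter]
        constructor
        · rintro ⟨h1, ⟨h2, -⟩, h4⟩
          have hsymm : π.symm bd = pj := Fin.ext (by omega)
          have hπpj : π pj = bd := by rw [← hsymm]; exact π.apply_symm_apply bd
          refine ⟨h1, hπpj, fun i hi hne => ?_⟩
          have hw := h2 i (by omega)
          have hne2 : π i ≠ bd := by
            intro hcc
            apply hne
            have : π.symm bd = i := by rw [← hcc]; exact π.symm_apply_apply i
            rw [← this, hsymm]
          have hnev : (π i : ℕ) ≠ a + (N+1) - m := fun hx => hne2 (Fin.ext (by omega))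
          unfold whigh at hw; unfold wmem; omega
        · rintro ⟨h1, h2, h3⟩
          have hsymm : π.symm bd = pj := by rw [← h2]; exact π.symm_apply_apply pj
          refine ⟨h1, ⟨fun i hi => ?_, by rw [hsymm, hpjv]; omega⟩, by rw [hsymm, hpjv]⟩
          rcases eq_or_ne i pj with rfl | hne
          · rw [h2, hbdv]; unfold whigh; omega
          · have hw := h3 i (by omega) hne
            unfold wmem at hw; unfold whigh; omega
      rw [hstep]
      exact masterH ha N e he pj bd (by omega) (by omega)
    rw [Finset.sum_congr rfl hconst, Finset.sum_const, smul_eq_mul, Finset.card_range]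
  have hL : cntW l m a (N+1) (e+1) (whigh a m (N+1)) = T.card := rfl
  rw [hL, ← hsplit, hN, hB]
  ring

open scoped Classical in
lemma ncard_setOf {α : Type*} [Fintype α] (p : α → Prop) :
    {x | p x}.ncard = (Finset.univ.filter p).card := by
  rw [Set.ncard_eq_toFinset_card']
  congr 1
  ext x
  simp


open scoped Classical in
lemma ACount_eq_cntW (l m a n d : ℕ) (hmn : m ≤ n) (hdn : d ≤ n) :
    ACount l m a n d = cntW l m a n d (wmem a m n) := by
  classical
  have hg : ∀ iv : Fin d → ℕ,
      gCount l m a n d (fun p => if h : p - 1 < d then iv ⟨p - 1, h⟩ else 0)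
      = ((Finset.univ : Finset (Perm (Fin n))).filter
          (fun π : Perm (Fin n) => PAvoids π (sigmaP (l + m) l a) ∧
            ∀ j : Fin n, ∀ hj : (j:ℕ) < d, (π j : ℕ) + 1 = iv ⟨(j:ℕ), hj⟩)).card := by
    intro iv
    rw [gCount, ncard_setOf]
    congr 1
    ext π
    simp only [Finset.mem_filter, Finset.mem_univ, true_and]
    constructor
    · rintro ⟨h1, h2⟩
      refine ⟨h1, fun j hj => ?_⟩
      have h3 := h2 j hj
      simp only [Nat.add_sub_cancel] at h3
      rwa [dif_pos hj] at h3
    · rintro ⟨h1, h2⟩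
      refine ⟨h1, fun j hj => ?_⟩
      have h3 := h2 j hj
      simp only [Nat.add_sub_cancel]
      rw [dif_pos hj]
      exact h3
  have hset : ∀ iv ∈ Fintype.piFinset (fun _ : Fin d => Finset.Icc (a + 1) (n - m + a)),
      (((AvF l m a n).filter
          (fun π : Perm (Fin n) => ∀ i : Fin n, (i:ℕ) < d → wmem a m n ((π i : ℕ)))).filter
        (fun π : Perm (Fin n) =>
          (fun q : Fin d => (π (Fin.castLE hdn q) : ℕ) + 1) = iv))
      = ((Finset.univ : Finset (Perm (Fin n))).filter
          (fun π : Perm (Fin n) => PAvoids π (sigmaP (l + m) l a) ∧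
            ∀ j : Fin n, ∀ hj : (j:ℕ) < d, (π j : ℕ) + 1 = iv ⟨(j:ℕ), hj⟩)) := by
    intro iv hiv
    rw [Fintype.mem_piFinset] at hiv
    ext π
    simp only [Finset.mem_filter, Finset.mem_univ, true_and, mem_AvF]
    constructor
    · rintro ⟨⟨hav, hwin⟩, hfib⟩
      refine ⟨hav, fun j hj => ?_⟩
      have h3 := congrFun hfib ⟨(j:ℕ), hj⟩
      have h4 : Fin.castLE hdn (⟨(j:ℕ), hj⟩ : Fin d) = j := Fin.ext rfl
      rw [h4] at h3
      exact h3
    · rintro ⟨hav, hpins⟩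
      have hwin : ∀ i : Fin n, (i:ℕ) < d → wmem a m n ((π i : ℕ)) := by
        intro i hi
        have h3 := hpins i hi
        have h4 := hiv ⟨(i:ℕ), hi⟩
        rw [Finset.mem_Icc] at h4
        unfold wmem
        omega
      refine ⟨⟨hav, hwin⟩, funext fun q => ?_⟩
      have h3 := hpins (Fin.castLE hdn q) (by simpa using q.2)
      rw [h3]
      congr 1
  rw [ACount, Finset.sum_congr rfl (fun iv _ => hg iv)]
  unfold cntW
  rw [Finset.card_eq_sum_card_fiberwise (f := fun π : Perm (Fin n) =>
      (fun q : Fin d => (π (Fin.castLE hdn q) : ℕ) + 1))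
      (t := Fintype.piFinset (fun _ : Fin d => Finset.Icc (a + 1) (n - m + a)))]
  · exact (Finset.sum_congr rfl (fun iv hiv => by rw [hset iv hiv])).symm
  · intro π hπ
    rw [Finset.mem_coe, Finset.mem_filter] at hπ
    rw [Finset.mem_coe, Fintype.mem_piFinset]
    intro q
    have h3 := hπ.2 (Fin.castLE hdn q) (by simpa using q.2)
    unfold wmem at h3
    rw [Finset.mem_Icc]
    beta_reduce
    omega

end AvRec

theorem ACount_recurrence (l m a n d : ℕ) (hl : 1 ≤ l) (hm : 1 ≤ m)
    (ha : a ≤ m) (hn : l + m + 1 ≤ n) (hd : 1 ≤ d) (hdl : d ≤ l - 1) :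
    (ACount l m a n (d + 1) : ℤ)
      = (ACount l m a n d : ℤ) - ((m : ℤ) - d) * (ACount l m a (n - 1) d : ℤ)
          - (d : ℤ) * (ACount l m a (n - 1) (d - 1) : ℤ) := by
  have hl2 : 2 ≤ l := by omega
  obtain ⟨N2, rfl⟩ : ∃ N2, n = N2 + 2 := ⟨n - 2, by omega⟩
  obtain ⟨e, rfl⟩ : ∃ e, d = e + 1 := ⟨d - 1, by omega⟩
  have hn1 : N2 + 2 - 1 = N2 + 1 := by omega
  have hd1 : e + 1 - 1 = e := by omega
  rw [hn1, hd1]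
  rw [AvRec.ACount_eq_cntW l m a (N2+2) (e+1+1) (by omega) (by omega),
      AvRec.ACount_eq_cntW l m a (N2+2) (e+1) (by omega) (by omega),
      AvRec.ACount_eq_cntW l m a (N2+1) (e+1) (by omega) (by omega),
      AvRec.ACount_eq_cntW l m a (N2+1) e (by omega) (by omega)]
  have h1 := AvRec.L1 (l:=l) (m:=m) (a:=a) ha (N2+1) (e+1) (by omega) (by omega) (by omega)
  have h4 := AvRec.L1 (l:=l) (m:=m) (a:=a) ha N2 e (by omega) (by omega) (by omega)
  have h2 : a * AvRec.cntW l m a (N2+1) (e+1) (AvRec.wlow a m (N2+1))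
      = a * AvRec.cntW l m a (N2+1) (e+1) (AvRec.wmem a m (N2+1))
        + a * ((e+1) * AvRec.cntW l m a N2 e (AvRec.wlow a m N2)) := by
    rcases Nat.eq_zero_or_pos a with rfl | hapos
    · simp
    · rw [AvRec.L2L ha hapos N2 e (by omega) (by omega) (by omega)]
      ring
  have h3 : (m - a) * AvRec.cntW l m a (N2+1) (e+1) (AvRec.whigh a m (N2+1))
      = (m - a) * AvRec.cntW l m a (N2+1) (e+1) (AvRec.wmem a m (N2+1))
        + (m - a) * ((e+1) * AvRec.cntW l m a N2 e (AvRec.whigh a m N2)) := by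
    rcases Nat.lt_or_ge a m with haM | haM
    · rw [AvRec.L2H ha haM N2 e (by omega) (by omega) (by omega)]
      ring
    · have : m - a = 0 := by omega
      rw [this]
      simp
  have z1 := congrArg (fun x : ℕ => (x : ℤ)) h1
  have z2 := congrArg (fun x : ℕ => (x : ℤ)) h2
  have z3 := congrArg (fun x : ℕ => (x : ℤ)) h3
  have z4 := congrArg (fun x : ℕ => (x : ℤ)) h4
  simp only [Nat.cast_add, Nat.cast_mul, Nat.cast_sub ha, Nat.cast_one] at z1 z2 z3 z4
  push_cast at z1 z2 z3 z4 ⊢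
  linear_combination (-1 : ℤ) * z1 - z2 - z3 + ((e:ℤ)+1) * z4
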